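/- For every generalised hypergraph program P over n propositional variables, there exists an (ordinary) hypergraph program P' computing the same Boolean function with |P'| ≤ n · |P|. -/

import Mathlib

/-- A vertex label: a constant 0/1 or a literal over variables `p₁, …, pₙ`. -/
inductive HLabel (n : ℕ) where
  | const : Bool → HLabel n
  | lit : Fin n → Bool → HLabel n

/-- Evaluation of a label under an input. -/
def HLabel.eval {n : ℕ} (α : Fin n → Bool) : HLabel n → Bool
  | .const b => b
  | .lit i pol => α i == pol

/-- A generalised hypergraph program over `n` variables: vertices are labelled with
(conjunctions of) labels; an ordinary HGP has at most one label per vertex. -/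
structure GenHGP (n : ℕ) where
  nv : ℕ
  label : Fin nv → List (HLabel n)
  edges : Finset (Finset (Fin nv))

/-- Evaluation of the (conjunctive) label of a vertex. -/
def GenHGP.evalLabel {n : ℕ} (P : GenHGP n) (α : Fin n → Bool) (v : Fin P.nv) : Bool :=
  (P.label v).all (HLabel.eval α)

/-- The output of a hypergraph program: 1 iff there is an independent set of hyperedges
containing every vertex whose label evaluates to 0. -/
def GenHGP.output {n : ℕ} (P : GenHGP n) (α : Fin n → Bool) : Prop :=
  ∃ S ⊆ P.edges, ((S : Set (Finset (Fin P.nv))).Pairwise fun e f => Disjoint e f) ∧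
    ∀ v : Fin P.nv, P.evalLabel α v = false → ∃ e ∈ S, v ∈ e

/-- The size of a hypergraph program: number of vertices plus number of hyperedges. -/
def GenHGP.size {n : ℕ} (P : GenHGP n) : ℕ := P.nv + P.edges.card

/-- An ordinary HGP: every vertex is labelled by 0, 1 or a single literal. -/
def GenHGP.IsOrdinary {n : ℕ} (P : GenHGP n) : Prop := ∀ v, (P.label v).length ≤ 1

/-- For every generalised hypergraph program `P` over `n` propositional
variables, there exists an (ordinary) hypergraph program `P'` computing the same Boolean
function with `|P'| ≤ n · |P|`. -/
noncomputable instance {n : ℕ} : DecidableEq (HLabel n) := Classical.decEq _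

def HLabel.isLit {n : ℕ} : HLabel n → Bool
  | .lit _ _ => true
  | _ => false

lemma norm_exists {n : ℕ} (hn : 1 ≤ n) (L : List (HLabel n)) :
    ∃ M : List (HLabel n), M.length ≤ n ∧
      ∀ α, M.all (HLabel.eval α) = L.all (HLabel.eval α) := by
  by_cases hsat : ∃ α, L.all (HLabel.eval α) = true
  · obtain ⟨α₀, hα₀⟩ := hsat
    rw [List.all_eq_true] at hα₀
    set M := L.dedup.filter HLabel.isLit with hM
    have hmemM : ∀ x ∈ M, x ∈ L ∧ x.isLit = true := by
      intro x hx
      rw [hM, List.mem_filter, List.mem_dedup] at hx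
      exact hx
    have hnd : M.Nodup := List.Nodup.filter _ L.nodup_dedup
    refine ⟨M, ?_, ?_⟩
    · -- length bound
      classical
      have hcard : M.length = M.toFinset.card := (List.toFinset_card_of_nodup hnd).symm
      rw [hcard]
      have := Finset.card_le_card_of_injOn (f := fun l : HLabel n =>
          match l with | .lit i _ => i | _ => (⟨0, hn⟩ : Fin n))
        (s := M.toFinset) (t := Finset.univ) (fun a _ => Finset.mem_univ _) ?_
      · exact le_trans this (by rw [Finset.card_univ, Fintype.card_fin])
      · intro a ha b hb hab
        simp only [Finset.coe_insert, Finset.mem_coe, List.mem_toFinset] at ha hb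
        obtain ⟨haL, haLit⟩ := hmemM a ha
        obtain ⟨hbL, hbLit⟩ := hmemM b hb
        have hea := hα₀ a haL
        have heb := hα₀ b hbL
        cases a with
        | const b => simp [HLabel.isLit] at haLit
        | lit i p =>
          cases b with
          | const b => simp [HLabel.isLit] at hbLit
          | lit j q =>
            subst hab
            simp only [HLabel.eval, beq_iff_eq] at hea heb
            rw [hea] at heb
            rw [heb]
    · intro α
      rw [Bool.eq_iff_iff, List.all_eq_true, List.all_eq_true]
      constructor
      · intro h x hx
        cases hcx : x with
        | const b =>
          subst hcx
          cases b with
          | true => simp [HLabel.eval]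
          | false =>
            have := hα₀ _ hx
            simp [HLabel.eval] at this
        | lit i p =>
          subst hcx
          apply h
          rw [hM, List.mem_filter, List.mem_dedup]
          exact ⟨hx, rfl⟩
      · intro h x hx
        exact h x (hmemM x hx).1
  · refine ⟨[.const false], by simpa using hn, fun α => ?_⟩
    have hf : L.all (HLabel.eval α) = false := by
      cases h : L.all (HLabel.eval α)
      · rfl
      · exact absurd ⟨α, h⟩ hsat
    simp [HLabel.eval, hf]

theorem stmt_2 {n : ℕ} (hn : 1 ≤ n) (P : GenHGP n) :
    ∃ P' : GenHGP n, P'.IsOrdinary ∧ (∀ α, P'.output α ↔ P.output α) ∧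
      P'.size ≤ n * P.size := by
  classical
  choose M hMlen hMeval using fun v : Fin P.nv => norm_exists hn (P.label v)
  let ι : Fin P.nv × Fin n ≃ Fin (P.nv * n) := finProdFinEquiv
  let f : Finset (Fin P.nv) → Finset (Fin (P.nv * n)) :=
    fun e => Finset.univ.filter (fun w => (ι.symm w).1 ∈ e)
  set P' : GenHGP n :=
    ⟨P.nv * n,
     fun w => [(M (ι.symm w).1).getD ((ι.symm w).2 : ℕ) (.const true)],
     P.edges.image f⟩ with hP'
  have hmemf : ∀ (e : Finset (Fin P.nv)) (w : Fin (P.nv * n)),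
      w ∈ f e ↔ (ι.symm w).1 ∈ e := by
    intro e w; simp [f]
  have hsymm : ∀ (v : Fin P.nv) (i : Fin n), ι.symm (ι (v, i)) = (v, i) :=
    fun v i => Equiv.symm_apply_apply _ _
  have hdisj : ∀ e g : Finset (Fin P.nv), Disjoint (f e) (f g) ↔ Disjoint e g := by
    intro e g
    constructor
    · intro h
      rw [Finset.disjoint_left] at h ⊢
      intro v hv hvg
      have h1 : ι (v, ⟨0, hn⟩) ∈ f e := by rw [hmemf, hsymm]; exact hv
      have h2 : ι (v, ⟨0, hn⟩) ∈ f g := by rw [hmemf, hsymm]; exact hvg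
      exact h h1 h2
    · intro h
      rw [Finset.disjoint_left] at h ⊢
      intro w hw hwg
      exact h ((hmemf e w).mp hw) ((hmemf g w).mp hwg)
  have hinj : ∀ e g : Finset (Fin P.nv), f e = f g → e = g := by
    intro e g h
    ext v
    constructor
    · intro hv
      have : ι (v, ⟨0, hn⟩) ∈ f e := by rw [hmemf, hsymm]; exact hv
      rw [h, hmemf, hsymm] at this; exact this
    · intro hv
      have : ι (v, ⟨0, hn⟩) ∈ f g := by rw [hmemf, hsymm]; exact hv
      rw [← h, hmemf, hsymm] at this; exact this
  -- characterization of false labels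
  have hevalw : ∀ (α : Fin n → Bool) (w : Fin (P.nv * n)),
      P'.evalLabel α w = false ↔
        HLabel.eval α ((M (ι.symm w).1).getD ((ι.symm w).2 : ℕ) (.const true)) = false := by
    intro α w
    simp only [GenHGP.evalLabel]
    show [((M (ι.symm w).1).getD ((ι.symm w).2 : ℕ) (.const true))].all (HLabel.eval α) = false ↔ _
    simp
  have hcov : ∀ (α : Fin n → Bool) (v : Fin P.nv),
      P.evalLabel α v = false ↔
        ∃ i : Fin n, HLabel.eval α ((M v).getD (i : ℕ) (.const true)) = false := by
    intro α v
    rw [GenHGP.evalLabel, ← hMeval v α]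
    constructor
    · intro h
      rw [List.all_eq_false] at h
      obtain ⟨x, hx, hxf⟩ := h
      obtain ⟨j, hj, hjx⟩ := List.mem_iff_getElem.mp hx
      refine ⟨⟨j, lt_of_lt_of_le hj (hMlen v)⟩, ?_⟩
      rw [List.getD_eq_getElem _ _ hj, hjx]
      exact Bool.eq_false_iff.mpr hxf
    · intro ⟨i, hi⟩
      rw [List.all_eq_false]
      by_cases hil : (i : ℕ) < (M v).length
      · exact ⟨(M v)[(i : ℕ)], List.getElem_mem _,
          by rw [List.getD_eq_getElem _ _ hil] at hi; simp [hi]⟩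
      · exfalso
        rw [List.getD_eq_default _ _ (le_of_not_gt hil)] at hi
        simp [HLabel.eval] at hi
  refine ⟨P', ?_, ?_, ?_⟩
  · intro w; show List.length [_] ≤ 1; simp
  · intro α
    constructor
    · rintro ⟨S', hS'sub, hS'pd, hS'cov⟩
      refine ⟨P.edges.filter (fun e => f e ∈ S'), Finset.filter_subset _ _, ?_, ?_⟩
      · intro e he g hg hne
        simp only [Finset.coe_filter, Set.mem_setOf_eq] at he hg
        rw [← hdisj]
        exact hS'pd he.2 hg.2 (fun hfe => hne (hinj e g hfe))
      · intro v hv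
        obtain ⟨i, hi⟩ := (hcov α v).mp hv
        have hw : P'.evalLabel α (ι (v, i)) = false := by
          rw [hevalw, hsymm]; exact hi
        obtain ⟨e'', he''S, hwe''⟩ := hS'cov _ hw
        obtain ⟨e, heE, hfe⟩ := Finset.mem_image.mp (hS'sub he''S)
        subst hfe
        refine ⟨e, Finset.mem_filter.mpr ⟨heE, he''S⟩, ?_⟩
        have := (hmemf e _).mp hwe''
        rwa [hsymm] at this
    · rintro ⟨S, hSsub, hSpd, hScov⟩
      refine ⟨S.image f, Finset.image_subset_image hSsub, ?_, ?_⟩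
      · intro a ha b hb hne
        simp only [Finset.coe_image, Set.mem_image, Finset.mem_coe] at ha hb
        obtain ⟨e, he, rfl⟩ := ha
        obtain ⟨g, hg, rfl⟩ := hb
        rw [hdisj]
        exact hSpd he hg (fun h => hne (congrArg f h))
      · intro w hw
        have hi := (hevalw α w).mp hw
        have : P.evalLabel α (ι.symm w).1 = false :=
          (hcov α (ι.symm w).1).mpr ⟨(ι.symm w).2, hi⟩
        obtain ⟨e, heS, hve⟩ := hScov _ this
        exact ⟨f e, Finset.mem_image_of_mem f heS, (hmemf e w).mpr hve⟩
  · have h1 : (P.edges.image f).card ≤ P.edges.card := Finset.card_image_le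
    have : P'.size = P.nv * n + (P.edges.image f).card := rfl
    rw [this, GenHGP.size]
    calc P.nv * n + (P.edges.image f).card ≤ P.nv * n + P.edges.card :=
          Nat.add_le_add_left h1 _
      _ ≤ n * P.nv + n * P.edges.card := by
          rw [Nat.mul_comm]
          exact Nat.add_le_add_left (Nat.le_mul_of_pos_left _ hn) _
      _ = n * (P.nv + P.edges.card) := (Nat.mul_add _ _ _).symm
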